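/- For γ ≥ 1 and τ_s > 1, define f_s(τ_s) := 2h(1 + (γ-1)h)(1 + (γ+1)h) + (τ_s + 1)((τ_s - 1)τ_s^(γ-1) - 2h)h', with h, h' evaluated at τ_s. Then f_s(τ_s) = (2(γ+1)τ_s h² + τ_s(τ_s² - 1)h' - 2h) h', and f_s(τ_s) > 0 for all τ_s > 1. -/

import Mathlib

/-- Polytropic enthalpy: `h(τ) = (τ^(γ-1) - 1)/(γ-1)` for `γ > 1`, `log τ` for `γ = 1`. -/
noncomputable def enthalpy (γ τ : ℝ) : ℝ :=
  if γ = 1 then Real.log τ else (τ ^ (γ - 1) - 1) / (γ - 1)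

/-- `f_s(τ) = 2h(1 + (γ-1)h)(1 + (γ+1)h) + (τ+1)((τ-1)τ^(γ-1) - 2h)h'`,
with `h` and `h' = τ^(γ-2)` evaluated at `τ`. -/
noncomputable def fS (γ τ : ℝ) : ℝ :=
  2 * enthalpy γ τ * (1 + (γ - 1) * enthalpy γ τ) * (1 + (γ + 1) * enthalpy γ τ) +
    (τ + 1) * ((τ - 1) * τ ^ (γ - 1) - 2 * enthalpy γ τ) * τ ^ (γ - 2)

lemma enthalpy_one_val (γ : ℝ) : enthalpy γ 1 = 0 := by
  unfold enthalpy
  split <;> simp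

lemma enthalpy_hasDerivAt (γ : ℝ) {τ : ℝ} (hτ : 0 < τ) :
    HasDerivAt (enthalpy γ) (τ ^ (γ - 2)) τ := by
  by_cases h1 : γ = 1
  · subst h1
    have hfun : enthalpy 1 = Real.log := by
      funext t; simp [enthalpy]
    rw [hfun]
    have : ((1 : ℝ) - 2) = -1 := by norm_num
    rw [this, Real.rpow_neg_one]
    exact Real.hasDerivAt_log hτ.ne'
  · have hfun : enthalpy γ = fun t : ℝ => (t ^ (γ - 1) - 1) / (γ - 1) := by
      funext t; simp [enthalpy, h1]
    rw [hfun]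
    have h := ((Real.hasDerivAt_rpow_const (x := τ) (p := γ - 1)
      (Or.inl hτ.ne')).sub_const 1).div_const (γ - 1)
    have hne : γ - 1 ≠ 0 := sub_ne_zero.mpr h1
    have he : (γ - 1) * τ ^ (γ - 1 - 1) / (γ - 1) = τ ^ (γ - 2) := by
      rw [show γ - 1 - 1 = γ - 2 by ring, mul_comm (γ - 1), mul_div_assoc,
        div_self hne, mul_one]
    rwa [he] at h

lemma one_add_mul_enthalpy (γ : ℝ) (hγ : 1 ≤ γ) {τ : ℝ} (hτ : 0 < τ) :
    τ ^ (γ - 1) = 1 + (γ - 1) * enthalpy γ τ := by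
  by_cases h1 : γ = 1
  · subst h1; simp [enthalpy]
  · have hne : γ - 1 ≠ 0 := sub_ne_zero.mpr h1
    simp only [enthalpy, h1, if_false]
    field_simp
    ring

lemma mul_rpow_sub_two (γ : ℝ) {τ : ℝ} (hτ : 0 < τ) :
    τ * τ ^ (γ - 2) = τ ^ (γ - 1) := by
  rw [show γ - 1 = (1 : ℝ) + (γ - 2) by ring, Real.rpow_add hτ, Real.rpow_one]

lemma key_ineq (γ : ℝ) (hγ : 1 ≤ γ) {τ : ℝ} (hτ : 1 < τ) :
    2 * enthalpy γ τ < (τ ^ 2 - 1) * τ ^ (γ - 1) := by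
  set g : ℝ → ℝ := fun x => (x ^ 2 - 1) * x ^ (γ - 1) - 2 * enthalpy γ x with hg_def
  have hg : ∀ x : ℝ, 0 < x →
      HasDerivAt g ((γ + 1) * (x ^ 2 - 1) * x ^ (γ - 2)) x := by
    intro x hx
    have h1 : HasDerivAt (fun x : ℝ => x ^ 2 - 1) (2 * x) x := by
      simpa using (hasDerivAt_pow 2 x).sub_const 1
    have h2 : HasDerivAt (fun x : ℝ => x ^ (γ - 1)) ((γ - 1) * x ^ (γ - 1 - 1)) x :=
      Real.hasDerivAt_rpow_const (Or.inl hx.ne')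
    have h3 := (h1.mul h2).sub ((enthalpy_hasDerivAt γ hx).const_mul 2)
    refine h3.congr_deriv (Eq.symm ?_)
    have e2 : x * x ^ (γ - 2) = x ^ (γ - 1) := mul_rpow_sub_two γ hx
    have e4 : (γ - 1 - 1) = (γ - 2) := by ring
    rw [e4]
    linear_combination (2 * x) * e2
  have hmono : StrictMonoOn g (Set.Ici (1 : ℝ)) := by
    apply strictMonoOn_of_deriv_pos (convex_Ici 1)
    · intro x hx
      exact (hg x (lt_of_lt_of_le one_pos hx)).continuousAt.continuousWithinAt
    · intro x hx
      rw [interior_Ici] at hx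
      have hx1 : (1 : ℝ) < x := hx
      have hx0 : (0 : ℝ) < x := lt_trans one_pos hx1
      rw [(hg x hx0).deriv]
      have hp : 0 < x ^ (γ - 2) := Real.rpow_pos_of_pos hx0 _
      have h2 : 0 < x ^ 2 - 1 := by nlinarith
      have h3 : 0 < γ + 1 := by linarith
      positivity
  have := hmono (Set.self_mem_Ici) (Set.mem_Ici.mpr hτ.le) hτ
  have hg1 : g 1 = 0 := by
    simp [hg_def, enthalpy_one_val]
  rw [hg1] at this
  simp only [hg_def] at this
  linarith

/-- For `γ ≥ 1` and `τ > 1`: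
`f_s(τ) = (2(γ+1)τh² + τ(τ²-1)h' - 2h)h'`, and `f_s(τ) > 0`. -/
theorem fS_eq_and_pos (γ : ℝ) (hγ : 1 ≤ γ) :
    ∀ τ : ℝ, 1 < τ →
      fS γ τ =
        (2 * (γ + 1) * τ * (enthalpy γ τ) ^ 2 + τ * (τ ^ 2 - 1) * τ ^ (γ - 2) -
            2 * enthalpy γ τ) * τ ^ (γ - 2) ∧
      0 < fS γ τ := by
  intro τ hτ
  have hτ0 : (0 : ℝ) < τ := lt_trans one_pos hτ
  have e1 : τ ^ (γ - 1) = 1 + (γ - 1) * enthalpy γ τ := one_add_mul_enthalpy γ hγ hτ0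
  have e2 : τ * τ ^ (γ - 2) = τ ^ (γ - 1) := mul_rpow_sub_two γ hτ0
  have hiden : fS γ τ =
      (2 * (γ + 1) * τ * (enthalpy γ τ) ^ 2 + τ * (τ ^ 2 - 1) * τ ^ (γ - 2) -
          2 * enthalpy γ τ) * τ ^ (γ - 2) := by
    unfold fS
    linear_combination (-(2 * enthalpy γ τ * (1 + (γ + 1) * enthalpy γ τ))) * e1 +
      (-(2 * enthalpy γ τ * (1 + (γ + 1) * enthalpy γ τ)) - (τ ^ 2 - 1) * τ ^ (γ - 2)) * e2
  refine ⟨hiden, ?_⟩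
  rw [hiden]
  have hp : 0 < τ ^ (γ - 2) := Real.rpow_pos_of_pos hτ0 _
  have hkey : 2 * enthalpy γ τ < (τ ^ 2 - 1) * τ ^ (γ - 1) := key_ineq γ hγ hτ
  have e3 : τ * (τ ^ 2 - 1) * τ ^ (γ - 2) = (τ ^ 2 - 1) * τ ^ (γ - 1) := by
    linear_combination (τ ^ 2 - 1) * e2
  have hsq : 0 ≤ 2 * (γ + 1) * τ * (enthalpy γ τ) ^ 2 := by
    have : (0:ℝ) ≤ 2 * (γ + 1) * τ := by nlinarith
    exact mul_nonneg this (sq_nonneg _)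
  have : 0 < 2 * (γ + 1) * τ * (enthalpy γ τ) ^ 2 + τ * (τ ^ 2 - 1) * τ ^ (γ - 2) -
      2 * enthalpy γ τ := by
    rw [e3]; linarith
  exact mul_pos this hp
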